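/- For positive definite matrices A, B and parameters r, s, t ∈ [0,1], the interpolation identity (A ♮_r B) ♮_t (A ♮_s B) = A ♮_{(1-t)r + ts} B holds. -/

import Mathlib

open Matrix
open scoped ComplexOrder

noncomputable def mpow {m : Type*} [Fintype m] [DecidableEq m]
    (A : Matrix m m ℂ) (t : ℝ) : Matrix m m ℂ :=
  if h : A.IsHermitian then
    (h.eigenvectorUnitary : Matrix m m ℂ) *
      Matrix.diagonal (fun i => ((h.eigenvalues i ^ t : ℝ) : ℂ)) *
      star (h.eigenvectorUnitary : Matrix m m ℂ)
  else A

/-- t-metric geometric mean `A ♯ₜ B`. -/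
noncomputable def msharp {m : Type*} [Fintype m] [DecidableEq m]
    (A B : Matrix m m ℂ) (t : ℝ) : Matrix m m ℂ :=
  mpow A (1/2) * mpow (mpow A (-(1/2)) * B * mpow A (-(1/2))) t * mpow A (1/2)

/-- t-spectral geometric mean `A ♮ₜ B`. -/
noncomputable def mnat {m : Type*} [Fintype m] [DecidableEq m]
    (A B : Matrix m m ℂ) (t : ℝ) : Matrix m m ℂ :=
  mpow (msharp A⁻¹ B (1/2)) t * A * mpow (msharp A⁻¹ B (1/2)) t

/-- Eigenvalues in non-increasing order (junk value `0` if not Hermitian). -/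
noncomputable def eigsDesc {n : ℕ} (A : Matrix (Fin n) (Fin n) ℂ) : Fin n → ℝ :=
  if h : A.IsHermitian then (fun i => h.eigenvalues (Tuple.sort h.eigenvalues i.rev)) else 0

/-- `x` is log-majorized by `y` (both listed in non-increasing order). -/
def LogMaj {n : ℕ} (x y : Fin n → ℝ) : Prop :=
  (∀ k : ℕ, ∏ i ∈ Finset.univ.filter (fun i : Fin n => (i : ℕ) < k), x i ≤
      ∏ i ∈ Finset.univ.filter (fun i : Fin n => (i : ℕ) < k), y i) ∧
    ∏ i, x i = ∏ i, y i

/-- k-th compound matrix. -/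
noncomputable def compound {n : ℕ} (k : ℕ) (A : Matrix (Fin n) (Fin n) ℂ) :
    Matrix {s : Finset (Fin n) // s.card = k} {s : Finset (Fin n) // s.card = k} ℂ :=
  fun s t => (A.submatrix (fun i => (s.1.orderIsoOfFin s.2 i : Fin n))
    (fun i => (t.1.orderIsoOfFin t.2 i : Fin n))).det


section lemmas
variable {m : Type*} [Fintype m] [DecidableEq m]

lemma specFinite {A : Matrix m m ℂ} (hA : A.IsHermitian) : (spectrum ℝ A).Finite :=
  hA.spectrum_real_eq_range_eigenvalues ▸ Set.finite_range _

lemma contOn {A : Matrix m m ℂ} (hA : A.IsHermitian) (f : ℝ → ℝ) :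
    ContinuousOn f (spectrum ℝ A) := (specFinite hA).continuousOn f

lemma spec_pos {A : Matrix m m ℂ} (hA : A.PosDef) {x : ℝ} (hx : x ∈ spectrum ℝ A) : 0 < x := by
  obtain ⟨i, rfl⟩ := hA.1.spectrum_real_eq_range_eigenvalues ▸ hx
  exact hA.eigenvalues_pos i

lemma mpow_eq_cfc {A : Matrix m m ℂ} (hA : A.IsHermitian) (t : ℝ) :
    mpow A t = cfc (fun x : ℝ => x ^ t) A := by
  rw [hA.cfc_eq, mpow, dif_pos hA, Matrix.IsHermitian.cfc]
  rfl


lemma posDef_conj {A B : Matrix m m ℂ} (hA : A.PosDef) (hB : IsUnit B) :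
    (Bᴴ * A * B).PosDef := by
  refine .of_dotProduct_mulVec_pos (Matrix.isHermitian_conjTranspose_mul_mul B hA.1) fun x hx => ?_
  have hx' : B *ᵥ x ≠ 0 := by
    intro h
    apply hx
    exact (Matrix.mulVec_injective_iff_isUnit.mpr hB) (by simpa using h)
  simpa only [star_mulVec, dotProduct_mulVec, vecMul_vecMul] using hA.dotProduct_mulVec_pos hx'

lemma posDef_conj_herm {A Z : Matrix m m ℂ} (hA : A.PosDef) (hZ : Z.PosDef) :
    (Z * A * Z).PosDef := by
  have := posDef_conj hA hZ.isUnit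
  rwa [hZ.1.eq] at this

lemma mpow_posDef {A : Matrix m m ℂ} (hA : A.PosDef) (t : ℝ) : (mpow A t).PosDef := by
  rw [mpow, dif_pos hA.1]
  have hd : (Matrix.diagonal fun i => ((hA.1.eigenvalues i ^ t : ℝ) : ℂ)).PosDef :=
    Matrix.posDef_diagonal_iff.mpr fun i => by
      exact Complex.zero_lt_real.mpr (Real.rpow_pos_of_pos (hA.eigenvalues_pos i) t)
  have hU : IsUnit (star (hA.1.eigenvectorUnitary : Matrix m m ℂ)) :=
    ⟨⟨star (hA.1.eigenvectorUnitary : Matrix m m ℂ), (hA.1.eigenvectorUnitary : Matrix m m ℂ),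
      Unitary.star_mul_self_of_mem (SetLike.coe_mem _),
      Unitary.mul_star_self_of_mem (SetLike.coe_mem _)⟩, rfl⟩
  have := posDef_conj hd hU
  rwa [← star_eq_conjTranspose, star_star] at this


lemma mpow_add {A : Matrix m m ℂ} (hA : A.PosDef) (a b : ℝ) :
    mpow A a * mpow A b = mpow A (a + b) := by
  rw [mpow_eq_cfc hA.1, mpow_eq_cfc hA.1, mpow_eq_cfc hA.1,
    ← cfc_mul _ _ A (contOn hA.1 _) (contOn hA.1 _)]
  exact cfc_congr fun x hx => (Real.rpow_add (spec_pos hA hx) a b).symm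

lemma mpow_zero {A : Matrix m m ℂ} (hA : A.PosDef) : mpow A 0 = 1 := by
  have hsa : IsSelfAdjoint A := hA.1
  rw [mpow_eq_cfc hA.1]
  rw [cfc_congr (g := fun _ : ℝ => (1:ℝ)) fun x _ => Real.rpow_zero x]
  exact cfc_const_one ℝ A

lemma mpow_one {A : Matrix m m ℂ} (hA : A.PosDef) : mpow A 1 = A := by
  have hsa : IsSelfAdjoint A := hA.1
  rw [mpow_eq_cfc hA.1]
  rw [cfc_congr (g := fun x : ℝ => x) fun x _ => Real.rpow_one x]
  exact cfc_id' ℝ A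

lemma mpow_mpow {A : Matrix m m ℂ} (hA : A.PosDef) (a b : ℝ) :
    mpow (mpow A a) b = mpow A (a * b) := by
  have hsa : IsSelfAdjoint A := hA.1
  calc mpow (mpow A a) b
      = cfc (fun x : ℝ => x ^ b) (cfc (fun x : ℝ => x ^ a) A) := by
        rw [mpow_eq_cfc (mpow_posDef hA a).1 b, mpow_eq_cfc hA.1 a]
    _ = cfc (fun x : ℝ => (x ^ a) ^ b) A :=
        (cfc_comp' _ _ A (((specFinite hA.1).image _).continuousOn _) (contOn hA.1 _)).symm
    _ = mpow A (a * b) := by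
        rw [mpow_eq_cfc hA.1]
        exact cfc_congr fun x hx => (Real.rpow_mul (spec_pos hA hx).le a b).symm

lemma mpow_neg_one {A : Matrix m m ℂ} (hA : A.PosDef) : mpow A (-1) = A⁻¹ := by
  have h1 : A * mpow A (-1) = 1 := by
    nth_rewrite 1 [← mpow_one hA]
    rw [mpow_add hA]
    norm_num [mpow_zero hA]
  exact (Matrix.inv_eq_right_inv h1).symm

lemma riccati_unique {A X Y : Matrix m m ℂ} (hA : A.PosDef) (hX : X.PosDef) (hY : Y.PosDef)
    (h : X * A * X = Y * A * Y) : X = Y := by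
  set R := mpow A (1/2 : ℝ) with hRdef
  set R' := mpow A (-(1/2) : ℝ) with hR'def
  have hR : R.PosDef := mpow_posDef hA _
  have hRR' : ∀ Z : Matrix m m ℂ, R * (R * Z) = A * Z := fun Z => by
    rw [← mul_assoc, mpow_add hA]; norm_num [mpow_one hA]
  have hR'R : R' * R = 1 := by rw [mpow_add hA]; norm_num [mpow_zero hA]
  have hRR'' : R * R' = 1 := by rw [mpow_add hA]; norm_num [mpow_zero hA]
  have e : ∀ Z : Matrix m m ℂ, (R * Z * R) * (R * Z * R) = R * (Z * (A * (Z * R))) := by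
    intro Z
    simp only [mul_assoc]
    rw [hRR' (Z * R)]
  have hsq : (R * X * R) ^ 2 = (R * Y * R) ^ 2 := by
    have h2 : R * (X * (A * (X * R))) = R * (Y * (A * (Y * R))) := by
      have := congrArg (fun Z => R * (Z * R)) h
      simpa only [mul_assoc] using this
    rw [pow_two, pow_two, e, e, h2]
  have hS : (R * X * R).PosSemidef := (posDef_conj_herm hX hR).posSemidef
  have hT : (R * Y * R).PosSemidef := (posDef_conj_herm hY hR).posSemidef
  have hST : R * X * R = R * Y * R := by
    open scoped Matrix.Norms.L2Operator MatrixOrder in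
    exact (CFC.sq_eq_sq_iff _ _ hS.nonneg hT.nonneg).mp hsq
  have cancel : ∀ Z : Matrix m m ℂ, R' * (R * Z * R) * R' = Z := by
    intro Z
    calc R' * (R * Z * R) * R' = (R' * R) * Z * (R * R') := by simp only [mul_assoc]
      _ = Z := by rw [hR'R, hRR'', one_mul, mul_one]
  rw [← cancel X, ← cancel Y, hST]


lemma msharp_spec {A B : Matrix m m ℂ} (hA : A.PosDef) (hB : B.PosDef) :
    (msharp A⁻¹ B (1/2)).PosDef ∧ msharp A⁻¹ B (1/2) * A * msharp A⁻¹ B (1/2) = B := by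
  have hP : (A⁻¹).PosDef := hA.inv
  set P := A⁻¹ with hPdef
  set R := mpow P (1/2) with hRdef
  set X := mpow P (-(1/2)) with hXdef
  have hXp : X.PosDef := mpow_posDef hP _
  have hRp : R.PosDef := mpow_posDef hP _
  have hQp : (X * B * X).PosDef := posDef_conj_herm hB hXp
  set Y := mpow (X * B * X) (1/2) with hYdef
  have hYp : Y.PosDef := mpow_posDef hQp _
  have hM : msharp P B (1/2) = R * Y * R := rfl
  have hXR : X * R = 1 := by
    rw [hXdef, hRdef, mpow_add hP, show (-(1/2) + 1/2 : ℝ) = 0 by norm_num, mpow_zero hP]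
  have hRX : R * X = 1 := by
    rw [hXdef, hRdef, mpow_add hP, show (1/2 + -(1/2) : ℝ) = 0 by norm_num, mpow_zero hP]
  have hAeq : mpow P (-1) = A := by
    rw [mpow_neg_one hP, hPdef, Matrix.nonsing_inv_nonsing_inv A hA.det_pos.ne'.isUnit]
  constructor
  · rw [hM]; exact posDef_conj_herm hYp hRp
  · rw [hM]
    have hRA : ∀ Z, R * (A * Z) = X * Z := fun Z => by
      rw [← mul_assoc, ← hAeq, hRdef, mpow_add hP,
        show (1/2 + -1 : ℝ) = -(1/2) by norm_num, ← hXdef]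
    have hYY : ∀ Z, Y * (Y * Z) = X * (B * (X * Z)) := fun Z => by
      rw [← mul_assoc, hYdef, mpow_add hQp, show (1/2 + 1/2 : ℝ) = 1 by norm_num,
        mpow_one hQp]
      simp only [mul_assoc]
    have hXR' : ∀ Z, X * (R * Z) = Z := fun Z => by rw [← mul_assoc, hXR, one_mul]
    have hRX' : ∀ Z, R * (X * Z) = Z := fun Z => by rw [← mul_assoc, hRX, one_mul]
    calc R * Y * R * A * (R * Y * R)
        = R * (Y * (R * (A * (R * (Y * R))))) := by simp only [mul_assoc]
      _ = R * (Y * (X * (R * (Y * R)))) := by rw [hRA]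
      _ = R * (Y * (Y * R)) := by rw [hXR']
      _ = R * (X * (B * (X * R))) := by rw [hYY]
      _ = B * (X * R) := by rw [hRX']
      _ = B := by rw [hXR, mul_one]

end lemmas

theorem mnat_interpolation {n : ℕ} (A B : Matrix (Fin n) (Fin n) ℂ)
    (hA : A.PosDef) (hB : B.PosDef) (r s t : ℝ)
    (hr : r ∈ Set.Icc (0:ℝ) 1) (hs : s ∈ Set.Icc (0:ℝ) 1) (ht : t ∈ Set.Icc (0:ℝ) 1) :
    mnat (mnat A B r) (mnat A B s) t = mnat A B ((1 - t) * r + t * s) := by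
  obtain ⟨hC, hCAC⟩ := msharp_spec hA hB
  set C := msharp A⁻¹ B (1/2) with hCdef
  have hG : ∀ u : ℝ, mnat A B u = mpow C u * A * mpow C u := fun u => rfl
  have hGpos : ∀ u : ℝ, (mnat A B u).PosDef := fun u => by
    rw [hG]; exact posDef_conj_herm hA (mpow_posDef hC u)
  obtain ⟨hD, hDPD⟩ := msharp_spec (hGpos r) (hGpos s)
  set P := mnat A B r with hPdef
  set Q := mnat A B s with hQdef
  set D := msharp P⁻¹ Q (1/2) with hDdef
  have hcomb : ∀ (a b : ℝ) (Z : Matrix (Fin n) (Fin n) ℂ),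
      mpow C a * (mpow C b * Z) = mpow C (a+b) * Z := fun a b Z => by
    rw [← mul_assoc, mpow_add hC]
  have hE : mpow C (s - r) * P * mpow C (s - r) = Q := by
    rw [hPdef, hQdef, hG r, hG s]
    calc mpow C (s-r) * (mpow C r * A * mpow C r) * mpow C (s-r)
        = mpow C (s-r) * (mpow C r * (A * (mpow C r * mpow C (s-r)))) := by
          simp only [mul_assoc]
      _ = mpow C ((s-r)+r) * (A * (mpow C r * mpow C (s-r))) := by rw [hcomb]
      _ = mpow C s * A * mpow C s := by
          rw [mpow_add hC, show r + (s-r) = s by ring, show (s-r)+r = s by ring, ← mul_assoc]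
  have hDE : D = mpow C (s - r) :=
    riccati_unique (hGpos r) hD (mpow_posDef hC (s-r)) (by rw [hDPD, hE])
  have lhs : mnat P Q t = mpow C ((s-r)*t) * P * mpow C ((s-r)*t) := by
    show mpow D t * P * mpow D t = _
    rw [hDE, mpow_mpow hC]
  rw [lhs, hPdef, hG r, hG ((1-t)*r + t*s)]
  calc mpow C ((s-r)*t) * (mpow C r * A * mpow C r) * mpow C ((s-r)*t)
      = mpow C ((s-r)*t) * (mpow C r * (A * (mpow C r * mpow C ((s-r)*t)))) := by
        simp only [mul_assoc]
    _ = mpow C ((s-r)*t + r) * (A * (mpow C r * mpow C ((s-r)*t))) := by rw [hcomb]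
    _ = mpow C ((1-t)*r + t*s) * A * mpow C ((1-t)*r+t*s) := by
        rw [mpow_add hC, show (s-r)*t + r = (1-t)*r + t*s by ring,
          show r + (s-r)*t = (1-t)*r+t*s by ring, ← mul_assoc]
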